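/- For any d×d complex matrix A and any positive definite matrix σ with trace 1, ‖A‖₁² ≤ tr[A† Ω(A)] · max_{U unitary} tr[U† Ω⁻¹(U)], where Ω is any positive definite invertible linear map on matrices; in particular for the Bures inversion Ω(X) = 2(σX + Xσ)⁻¹-type map, i.e. Ω⁻¹(X) = (σX + Xσ)/2, the maximum over unitaries equals 1, hence ‖A‖₁² ≤ tr[A† Ω_Bures(A)]. -/

import Mathlib

open Matrix
open scoped ComplexOrder

/-! ### Auxiliary lemmas -/

lemma trace_re_nonneg' {d : ℕ} {M : Matrix (Fin d) (Fin d) ℂ} (hM : M.PosSemidef) :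
    0 ≤ M.trace.re := by
  have h : ∀ i, 0 ≤ M i i := by
    intro i
    have := hM.dotProduct_mulVec_nonneg (Pi.single i 1)
    simpa [dotProduct, Matrix.mulVec, Pi.single_apply, Finset.sum_ite_eq,
      Finset.sum_ite_eq'] using this
  have : 0 ≤ M.trace := Finset.sum_nonneg fun i _ => h i
  exact (Complex.le_def.mp this).1

noncomputable def ev {d : ℕ} (w : Fin d → ℂ) : EuclideanSpace ℂ (Fin d) :=
  (WithLp.equiv 2 (Fin d → ℂ)).symm w

lemma ev_norm_sq {d : ℕ} (w : Fin d → ℂ) : ‖ev w‖^2 = ∑ i, Complex.normSq (w i) := by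
  rw [EuclideanSpace.norm_eq, Real.sq_sqrt (by positivity)]
  congr 1; ext i
  rw [show (ev w) i = w i from rfl, ← Complex.sq_norm]

lemma dot_self_eq {d : ℕ} (w : Fin d → ℂ) : star w ⬝ᵥ w = ((‖ev w‖^2 : ℝ) : ℂ) := by
  rw [ev_norm_sq]
  push_cast
  simp [dotProduct, Complex.normSq_eq_conj_mul_self]

/-- If `1 - xᴴx` is positive semidefinite, then so is `1 - xxᴴ`. -/
lemma swap_psd {d : ℕ} {x : Matrix (Fin d) (Fin d) ℂ} (h : (1 - xᴴ * x).PosSemidef) :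
    (1 - x * xᴴ).PosSemidef := by
  have hadj : ∀ (v u : Fin d → ℂ), star v ⬝ᵥ (x *ᵥ u) = star (xᴴ *ᵥ v) ⬝ᵥ u := by
    intro v u
    rw [Matrix.dotProduct_mulVec, Matrix.star_mulVec, Matrix.conjTranspose_conjTranspose]
  have hcontr : ∀ w : Fin d → ℂ, ‖ev (x *ᵥ w)‖ ≤ ‖ev w‖ := by
    intro w
    have h2 := h.dotProduct_mulVec_nonneg w
    rw [Matrix.sub_mulVec, dotProduct_sub, Matrix.one_mulVec, ← Matrix.mulVec_mulVec] at h2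
    rw [show star w ⬝ᵥ (xᴴ *ᵥ (x *ᵥ w)) = star (x *ᵥ w) ⬝ᵥ (x *ᵥ w) by
      rw [Matrix.dotProduct_mulVec, Matrix.star_mulVec]] at h2
    rw [dot_self_eq, dot_self_eq] at h2
    have h3 := (Complex.le_def.mp h2).1
    simp only [Complex.sub_re, Complex.ofReal_re, Complex.zero_re] at h3
    nlinarith [norm_nonneg (ev w), norm_nonneg (ev (x *ᵥ w))]
  refine Matrix.PosSemidef.of_dotProduct_mulVec_nonneg ?_ ?_
  · unfold Matrix.IsHermitian
    simp [Matrix.conjTranspose_sub, Matrix.conjTranspose_mul]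
  intro v
  set u := xᴴ *ᵥ v with hu
  have e1 : star v ⬝ᵥ ((1 - x * xᴴ) *ᵥ v) = star v ⬝ᵥ v - star u ⬝ᵥ u := by
    rw [Matrix.sub_mulVec, dotProduct_sub, Matrix.one_mulVec, ← Matrix.mulVec_mulVec,
      hadj v u]
  rw [e1]
  have hCS : ‖ev u‖ ≤ ‖ev v‖ := by
    have e2 : star u ⬝ᵥ u = star v ⬝ᵥ (x *ᵥ u) := (hadj v u).symm
    have e3 : ((‖ev u‖^2 : ℝ) : ℂ) = inner (𝕜 := ℂ) (ev v) (ev (x *ᵥ u)) := by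
      rw [← dot_self_eq, e2, EuclideanSpace.inner_eq_star_dotProduct, dotProduct_comm]; rfl
    have e4 : ‖ev u‖^2 ≤ ‖ev v‖ * ‖ev (x *ᵥ u)‖ := by
      calc ‖ev u‖^2 = ‖((‖ev u‖^2 : ℝ) : ℂ)‖ := by
            rw [Complex.norm_real]; exact (abs_of_nonneg (by positivity)).symm
        _ = ‖inner (𝕜 := ℂ) (ev v) (ev (x *ᵥ u))‖ := by rw [e3]
        _ ≤ _ := norm_inner_le_norm _ _
    have e5 := hcontr u
    nlinarith [norm_nonneg (ev u), norm_nonneg (ev v), norm_nonneg (ev (x *ᵥ u))]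
  rw [dot_self_eq, dot_self_eq]
  rw [Complex.le_def]
  refine ⟨?_, by simp [← Complex.ofReal_pow]⟩
  simp only [Complex.sub_re, Complex.ofReal_re, Complex.zero_re]
  nlinarith [norm_nonneg (ev u)]

section f
variable {d : ℕ} (σ : Matrix (Fin d) (Fin d) ℂ)

noncomputable def fB (u : Matrix (Fin d) (Fin d) ℂ) : ℝ :=
  ((uᴴ * (σ * u + u * σ)).trace).re

variable {σ}

lemma fB_nonneg (hσ : σ.PosDef) (u : Matrix (Fin d) (Fin d) ℂ) : 0 ≤ fB σ u := by
  rw [fB, Matrix.mul_add, Matrix.trace_add, Complex.add_re]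
  have h1 : 0 ≤ ((uᴴ * (σ * u)).trace).re := by
    rw [← Matrix.mul_assoc]
    exact trace_re_nonneg' (hσ.posSemidef.conjTranspose_mul_mul_same u)
  have h2 : 0 ≤ ((uᴴ * (u * σ)).trace).re := by
    rw [← Matrix.mul_assoc, ← Matrix.trace_mul_cycle]
    exact trace_re_nonneg' (hσ.posSemidef.mul_mul_conjTranspose_same u)
  linarith

lemma fB_sym (hσ : σ.PosDef) (u w : Matrix (Fin d) (Fin d) ℂ) :
    ((wᴴ * (σ * u + u * σ)).trace).re = ((uᴴ * (σ * w + w * σ)).trace).re := by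
  have hσH : σᴴ = σ := hσ.isHermitian
  have key : star ((wᴴ * (σ * u + u * σ)).trace) = (uᴴ * (σ * w + w * σ)).trace :=
    calc star ((wᴴ * (σ * u + u * σ)).trace)
        = ((wᴴ * (σ * u + u * σ))ᴴ).trace := (Matrix.trace_conjTranspose _).symm
      _ = ((uᴴ * σ) * w).trace + ((σ * uᴴ) * w).trace := by
          rw [Matrix.conjTranspose_mul, Matrix.conjTranspose_add, Matrix.conjTranspose_mul,
            Matrix.conjTranspose_mul, Matrix.conjTranspose_conjTranspose, hσH,
            Matrix.add_mul, Matrix.trace_add]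
      _ = (uᴴ * (σ * w)).trace + (uᴴ * (w * σ)).trace := by
          congr 1
          · rw [Matrix.mul_assoc]
          · rw [← Matrix.mul_assoc, Matrix.trace_mul_cycle σ uᴴ w,
              Matrix.trace_mul_cycle w σ uᴴ, Matrix.mul_assoc]
      _ = (uᴴ * (σ * w + w * σ)).trace := by rw [Matrix.mul_add, Matrix.trace_add]
  calc ((wᴴ * (σ * u + u * σ)).trace).re
      = (star ((wᴴ * (σ * u + u * σ)).trace)).re := by
        rw [Complex.star_def, Complex.conj_re]
    _ = _ := by rw [key]

lemma fB_expand (hσ : σ.PosDef) (u w : Matrix (Fin d) (Fin d) ℂ) (s : ℝ) :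
    fB σ (u + (s:ℂ) • w)
      = fB σ u + 2 * s * ((uᴴ * (σ * w + w * σ)).trace).re + s^2 * fB σ w := by
  have expand : (u + (s:ℂ) • w)ᴴ * (σ * (u + (s:ℂ) • w) + (u + (s:ℂ) • w) * σ)
      = uᴴ * (σ * u + u * σ) + (s:ℂ) • (uᴴ * (σ * w + w * σ))
        + (s:ℂ) • (wᴴ * (σ * u + u * σ)) + ((s:ℂ) * (s:ℂ)) • (wᴴ * (σ * w + w * σ)) := by
    rw [Matrix.conjTranspose_add, Matrix.conjTranspose_smul, Complex.star_def,
      Complex.conj_ofReal]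
    simp only [Matrix.mul_add, Matrix.add_mul, Matrix.mul_smul, Matrix.smul_mul,
      smul_add, smul_smul]
    abel
  have hsym := fB_sym hσ u w
  rw [fB, expand]
  simp only [fB, Matrix.trace_add, Matrix.trace_smul, smul_eq_mul, Complex.add_re,
    Complex.mul_re, Complex.mul_im, Complex.ofReal_re, Complex.ofReal_im]
  rw [hsym]
  ring

lemma fB_le_two (hσ : σ.PosDef) (hσtr : σ.trace = 1) {x : Matrix (Fin d) (Fin d) ℂ}
    (h1 : (1 - xᴴ * x).PosSemidef) (h2 : (1 - x * xᴴ).PosSemidef) : fB σ x ≤ 2 := by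
  have hb : ∀ M : Matrix (Fin d) (Fin d) ℂ, (1 - M).PosSemidef → ((M * σ).trace).re ≤ 1 := by
    intro M hM
    obtain ⟨s, hsH, hss⟩ : ∃ s : Matrix (Fin d) (Fin d) ℂ, sᴴ = s ∧ s * s = σ := by
      open scoped MatrixOrder in
      exact ⟨CFC.sqrt σ, (IsSelfAdjoint.of_nonneg (CFC.sqrt_nonneg σ)).star_eq,
        CFC.sqrt_mul_sqrt_self σ hσ.posSemidef.nonneg⟩
    have hp : (s * (1 - M) * s).PosSemidef := by
      have := hM.mul_mul_conjTranspose_same s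
      rwa [hsH] at this
    have hexp : s * (1 - M) * s = σ - s * M * s := by
      rw [Matrix.mul_sub, Matrix.mul_one, Matrix.sub_mul, hss]
    have htr : (s * M * s).trace = (M * σ).trace := by
      rw [Matrix.trace_mul_cycle s M s, hss, Matrix.trace_mul_comm]
    have := trace_re_nonneg' hp
    rw [hexp, Matrix.trace_sub, Complex.sub_re, htr, hσtr] at this
    simpa using this
  rw [fB, Matrix.mul_add, Matrix.trace_add, Complex.add_re]
  have hA1 : ((xᴴ * (σ * x)).trace).re ≤ 1 := by
    rw [← Matrix.mul_assoc, Matrix.trace_mul_cycle xᴴ σ x]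
    exact hb (x * xᴴ) h2
  have hA2 : ((xᴴ * (x * σ)).trace).re ≤ 1 := by
    rw [← Matrix.mul_assoc]
    exact hb (xᴴ * x) h1
  linarith

end f

/-- The trace norm `‖A‖₁ = tr √(A†A)` of a complex matrix. -/
noncomputable def traceNorm {d : ℕ} (A : Matrix (Fin d) (Fin d) ℂ) : ℝ :=
  (((Matrix.posSemidef_conjTranspose_mul_self A).1.eigenvectorUnitary : Matrix (Fin d) (Fin d) ℂ) *
    diagonal (((↑) : ℝ → ℂ) ∘ Real.sqrt ∘ (Matrix.posSemidef_conjTranspose_mul_self A).1.eigenvalues) *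
    (star ((Matrix.posSemidef_conjTranspose_mul_self A).1.eigenvectorUnitary :
      Matrix (Fin d) (Fin d) ℂ))).trace.re

/-- For any matrix `A` and positive definite density matrix `σ`,
`‖A‖₁² ≤ ⟨A, Ω_Bures(A)⟩`, where `Y = Ω_Bures(A)` is the unique solution of
`σY + Yσ = 2A` (the Bures inversion) and `⟨X,Y⟩ = tr[X†Y]`. -/
theorem traceNorm_sq_le_bures (d : ℕ) (A σ Y : Matrix (Fin d) (Fin d) ℂ)
    (hσ : σ.PosDef) (hσtr : σ.trace = 1)
    (hY : σ * Y + Y * σ = (2 : ℂ) • A) :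
    traceNorm A ^ 2 ≤ ((Aᴴ * Y).trace).re := by
  have hAA := Matrix.posSemidef_conjTranspose_mul_self A
  set hH : (Aᴴ*A).IsHermitian := hAA.1 with hHdef
  set V : Matrix (Fin d) (Fin d) ℂ := (hH.eigenvectorUnitary : Matrix (Fin d) (Fin d) ℂ)
    with hVdef
  set μ : Fin d → ℝ := hH.eigenvalues with hμdef
  have hμ : ∀ i, 0 ≤ μ i := fun i => hAA.eigenvalues_nonneg i
  have hVV : Vᴴ * V = 1 := by
    rw [← Matrix.star_eq_conjTranspose]
    exact Matrix.mem_unitaryGroup_iff'.mp hH.eigenvectorUnitary.2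
  have hVV' : V * Vᴴ = 1 := by
    rw [← Matrix.star_eq_conjTranspose]
    exact Matrix.mem_unitaryGroup_iff.mp hH.eigenvectorUnitary.2
  have hspec : Aᴴ * A = V * Matrix.diagonal (fun i => (μ i : ℂ)) * Vᴴ := by
    have := hH.spectral_theorem
    rw [Unitary.conjStarAlgAut_apply, Matrix.star_eq_conjTranspose] at this
    exact this
  have hcancel : ∀ Z : Matrix (Fin d) (Fin d) ℂ, Vᴴ * (V * Z) = Z := by
    intro Z; rw [← Matrix.mul_assoc, hVV, Matrix.one_mul]
  have hVdiag : ∀ (a b : Fin d → ℂ), (V * Matrix.diagonal a * Vᴴ) * (V * Matrix.diagonal b * Vᴴ)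
      = V * Matrix.diagonal (fun i => a i * b i) * Vᴴ := by
    intro a b
    simp only [Matrix.mul_assoc, hcancel]
    rw [← Matrix.diagonal_mul_diagonal]
    simp only [Matrix.mul_assoc]
  have htr : ∀ E : Matrix (Fin d) (Fin d) ℂ, (V * E * Vᴴ).trace = E.trace := by
    intro E; rw [Matrix.trace_mul_cycle, hVV, Matrix.one_mul]
  have hsqrt : traceNorm A = ((V * Matrix.diagonal (fun i => (Real.sqrt (μ i) : ℂ)) * Vᴴ).trace).re := by
    rfl
  have htn : traceNorm A = ∑ i, Real.sqrt (μ i) := by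
    rw [hsqrt, htr, Matrix.trace_diagonal, Complex.re_sum]
    simp
  -- the target quantity
  set c : ℝ := ((Yᴴ * A).trace).re with hc
  have hgoal : ((Aᴴ * Y).trace).re = c := by
    rw [hc]
    have : (Yᴴ * A).trace = star ((Aᴴ * Y).trace) := by
      rw [← Matrix.trace_conjTranspose, Matrix.conjTranspose_mul,
        Matrix.conjTranspose_conjTranspose]
    rw [this, Complex.star_def, Complex.conj_re]
  have hfY : fB σ Y = 2 * c := by
    rw [fB, hY, Matrix.mul_smul, Matrix.trace_smul, hc]
    simp [Complex.mul_re]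
  have hc0 : 0 ≤ c := by
    have := fB_nonneg hσ Y
    rw [hfY] at this
    linarith
  -- the per-ε estimate
  have key : ∀ ε : ℝ, 0 < ε → traceNorm A ≤ Real.sqrt c + d * ε := by
    intro ε hε
    set gR : Fin d → ℝ := fun i => 1/(Real.sqrt (μ i) + ε) with hgR
    set P : Matrix (Fin d) (Fin d) ℂ := V * Matrix.diagonal (fun i => (gR i : ℂ)) * Vᴴ with hP
    set x : Matrix (Fin d) (Fin d) ℂ := A * P with hx
    have hsε : ∀ i, 0 < Real.sqrt (μ i) + ε := fun i => by
      have := Real.sqrt_nonneg (μ i); linarith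
    have hPH : Pᴴ = P := by
      rw [hP, Matrix.conjTranspose_mul, Matrix.conjTranspose_mul,
        Matrix.conjTranspose_conjTranspose, Matrix.diagonal_conjTranspose]
      have : (star fun i => ((gR i : ℂ))) = fun i => ((gR i : ℂ)) := by
        funext i; simp [Pi.star_apply, Complex.star_def, Complex.conj_ofReal]
      rw [this, Matrix.mul_assoc]
    have hxA : xᴴ * A = V * Matrix.diagonal (fun i => (gR i : ℂ) * (μ i : ℂ)) * Vᴴ := by
      rw [hx, Matrix.conjTranspose_mul, hPH, Matrix.mul_assoc, hspec, hP, hVdiag]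
    set r : ℝ := ((xᴴ * A).trace).re with hrdef
    have hr : r = ∑ i, gR i * μ i := by
      rw [hrdef, hxA, htr, Matrix.trace_diagonal, Complex.re_sum]
      push_cast
      simp
    have hxx : xᴴ * x = V * Matrix.diagonal (fun i => (gR i : ℂ) * (μ i : ℂ) * (gR i : ℂ)) * Vᴴ := by
      rw [hx, Matrix.conjTranspose_mul, hPH, show P * Aᴴ * (A * P) = (P * (Aᴴ * A)) * P by
        simp [Matrix.mul_assoc], hspec, hP, hVdiag, hVdiag]
    have hpsd1 : (1 - xᴴ * x).PosSemidef := by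
      have h1 : (1 : Matrix (Fin d) (Fin d) ℂ) = V * Matrix.diagonal (fun _ => (1:ℂ)) * Vᴴ := by
        rw [Matrix.diagonal_one, Matrix.mul_one, hVV']
      have h2 : 1 - xᴴ * x
          = V * Matrix.diagonal (fun i => (1:ℂ) - (gR i : ℂ) * (μ i : ℂ) * (gR i : ℂ)) * Vᴴ := by
        rw [hxx]
        nth_rewrite 1 [h1]
        rw [← Matrix.sub_mul, ← Matrix.mul_sub, Matrix.diagonal_sub]
      rw [h2]
      apply Matrix.PosSemidef.mul_mul_conjTranspose_same
      apply Matrix.PosSemidef.diagonal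
      intro i
      simp only [Pi.zero_apply]
      have heq : (1:ℂ) - (gR i : ℂ) * (μ i : ℂ) * (gR i : ℂ)
          = ((1 - gR i * μ i * gR i : ℝ) : ℂ) := by push_cast; ring
      rw [heq, Complex.zero_le_real, sub_nonneg, hgR]
      have h2' : Real.sqrt (μ i) ^ 2 = μ i := Real.sq_sqrt (hμ i)
      have h3 := hsε i
      rw [show 1/(Real.sqrt (μ i) + ε) * μ i * (1/(Real.sqrt (μ i) + ε))
        = μ i / (Real.sqrt (μ i) + ε)^2 by field_simp,
        div_le_one (by positivity)]
      nlinarith [hε, Real.sqrt_nonneg (μ i)]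
    have hpsd2 : (1 - x * xᴴ).PosSemidef := swap_psd hpsd1
    have hfx : fB σ x ≤ 2 := fB_le_two hσ hσtr hpsd1 hpsd2
    have hcross : ((xᴴ * (σ * Y + Y * σ)).trace).re = 2 * r := by
      rw [hY, Matrix.mul_smul, Matrix.trace_smul, hrdef]
      simp [Complex.mul_re]
    -- the quadratic inequality
    have quad : ∀ s : ℝ, 0 ≤ 2 + 2 * s * (2 * r) + s^2 * (2 * c) := by
      intro s
      have h0 := fB_nonneg hσ (x + (s:ℂ) • Y)
      rw [fB_expand hσ x Y s, hcross, hfY] at h0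
      linarith
    -- r² ≤ c
    have hr2 : r^2 ≤ c := by
      rcases eq_or_lt_of_le hc0 with hcz | hcp
      · have hr0 : r = 0 := by
          by_contra hrne
          have hq := quad (-1/r)
          rw [← hcz] at hq
          have : 2 + 2 * (-1/r) * (2*r) + (-1/r)^2 * (2*0) = -2 := by
            field_simp
            ring
          rw [this] at hq
          linarith
        rw [hr0, ← hcz]
        simp
      · have hq := quad (-(r/c))
        have heq : 2 + 2 * (-(r/c)) * (2*r) + (-(r/c))^2 * (2*c) = 2 - 2 * (r^2/c) := by
          field_simp
          ring
        rw [heq] at hq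
        have h5 : r^2/c ≤ 1 := by linarith
        rwa [div_le_one hcp] at h5
    have hrsqrt : r ≤ Real.sqrt c :=
      calc r ≤ |r| := le_abs_self r
        _ = Real.sqrt (r^2) := (Real.sqrt_sq_eq_abs r).symm
        _ ≤ Real.sqrt c := Real.sqrt_le_sqrt hr2
    -- traceNorm A ≤ r + d * ε
    have htle : traceNorm A ≤ r + d * ε := by
      rw [htn, hr]
      have hpt : ∀ i, Real.sqrt (μ i) ≤ gR i * μ i + ε := by
        intro i
        have h3 := hsε i
        have h2' : Real.sqrt (μ i) ^ 2 = μ i := Real.sq_sqrt (hμ i)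
        have : Real.sqrt (μ i) - ε ≤ gR i * μ i := by
          rw [hgR, show 1/(Real.sqrt (μ i) + ε) * μ i = μ i / (Real.sqrt (μ i) + ε) by ring,
            le_div_iff₀ h3]
          nlinarith
        linarith
      calc ∑ i, Real.sqrt (μ i) ≤ ∑ i, (gR i * μ i + ε) :=
            Finset.sum_le_sum fun i _ => hpt i
        _ = (∑ i, gR i * μ i) + d * ε := by
            rw [Finset.sum_add_distrib, Finset.sum_const, Finset.card_univ, Fintype.card_fin,
              nsmul_eq_mul]
    linarith
  -- conclude
  have htpos : 0 ≤ traceNorm A := by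
    rw [htn]
    exact Finset.sum_nonneg fun i _ => Real.sqrt_nonneg _
  have hle : traceNorm A ≤ Real.sqrt c := by
    apply le_of_forall_pos_le_add
    intro δ hδ
    have hd1 : (0:ℝ) < d + 1 := by positivity
    have := key (δ/(d+1)) (by positivity)
    have hdd : (d:ℝ) * (δ/(d+1)) ≤ δ := by
      rw [mul_div_assoc']
      rw [div_le_iff₀ hd1]
      nlinarith [hδ.le]
    linarith
  rw [hgoal]
  calc traceNorm A ^ 2 ≤ Real.sqrt c ^ 2 := by
        apply pow_le_pow_left₀ htpos hle
    _ = c := Real.sq_sqrt hc0
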